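/- Let δ > 0 and r ∈ ℝ, and consider the nonautonomous scalar equation x'(t) = −(x(t) − rt)((x(t) − rt)² − δ²). (a) For c ∈ ℝ, the function x(t) = rt + c is a solution if and only if δ²c − c³ = r. (b) Setting r_c := 2δ³/(3√3): if |r| < r_c there are exactly three distinct such values of c; if |r| = r_c there are exactly two distinct values (with c = δ/√3 a double root of δ²c − c³ − r when r = r_c, and c = −δ/√3 a double root when r = −r_c); and if |r| > r_c there is exactly one such value. -/

import Mathlib

private lemma s3_sq : Real.sqrt 3 ^ 2 = 3 := Real.sq_sqrt (by norm_num)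
private lemma s3_pos : (0:ℝ) < Real.sqrt 3 := Real.sqrt_pos.mpr (by norm_num)

private lemma f_at_a (δ : ℝ) :
    δ ^ 2 * (δ / Real.sqrt 3) - (δ / Real.sqrt 3) ^ 3 = 2 * δ ^ 3 / (3 * Real.sqrt 3) := by
  have hs := s3_sq
  have hp := s3_pos.ne'
  field_simp
  linear_combination δ^3 * hs

private lemma two_roots (δ r c₁ c₂ : ℝ) (h1 : δ ^ 2 * c₁ - c₁ ^ 3 = r)
    (h2 : δ ^ 2 * c₂ - c₂ ^ 3 = r) (hne : c₁ ≠ c₂) :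
    δ ^ 2 = c₁ ^ 2 + c₁ * c₂ + c₂ ^ 2 := by
  have h : (c₁ - c₂) * (δ ^ 2 - (c₁ ^ 2 + c₁ * c₂ + c₂ ^ 2)) = 0 := by
    linear_combination h1 - h2
  rcases mul_eq_zero.mp h with h | h
  · exact absurd (sub_eq_zero.mp h) hne
  · linarith [sub_eq_zero.mp h]

private lemma mem_three (δ r c₁ c₂ c₃ c : ℝ)
    (h1 : δ ^ 2 * c₁ - c₁ ^ 3 = r) (h2 : δ ^ 2 * c₂ - c₂ ^ 3 = r) (h3 : δ ^ 2 * c₃ - c₃ ^ 3 = r)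
    (h12 : c₁ ≠ c₂) (h13 : c₁ ≠ c₃) (h23 : c₂ ≠ c₃)
    (hc : δ ^ 2 * c - c ^ 3 = r) : c = c₁ ∨ c = c₂ ∨ c = c₃ := by
  have hA := two_roots δ r c₁ c₂ h1 h2 h12
  have hB := two_roots δ r c₁ c₃ h1 h3 h13
  have hs : c₁ + c₂ + c₃ = 0 := by
    have h : (c₂ - c₃) * (c₁ + c₂ + c₃) = 0 := by linear_combination hB - hA
    rcases mul_eq_zero.mp h with h | h
    · exact absurd (sub_eq_zero.mp h) h23
    · exact h
  have key : (c - c₁) * (c - c₂) * (c - c₃) = 0 := by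
    have hc3 : c₃ = -c₁ - c₂ := by linarith
    subst hc3
    linear_combination (-1 : ℝ) * hc + h1 + (c - c₁) * hA
  rcases mul_eq_zero.mp key with h | h
  · rcases mul_eq_zero.mp h with h | h
    · exact Or.inl (sub_eq_zero.mp h)
    · exact Or.inr (Or.inl (sub_eq_zero.mp h))
  · exact Or.inr (Or.inr (sub_eq_zero.mp h))

private lemma fM_bound (δ x : ℝ) (hδ : 0 < δ) (hx : 0 ≤ x) :
    δ ^ 2 * (δ + x + 1) - (δ + x + 1) ^ 3 ≤ -(x + 1) := by
  nlinarith [mul_nonneg hx hδ.le, mul_nonneg (mul_nonneg hx hδ.le) hδ.le,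
    mul_nonneg hx hx, sq_nonneg (δ + x), mul_nonneg (mul_nonneg hx hx) hδ.le,
    mul_nonneg (mul_nonneg hx hx) hx, sq_nonneg δ, mul_pos hδ hδ]

private lemma f_cont (δ : ℝ) : Continuous fun c : ℝ => δ ^ 2 * c - c ^ 3 := by
  continuity

private lemma count_three (δ r : ℝ) (hδ : 0 < δ)
    (hlt : |r| < 2 * δ ^ 3 / (3 * Real.sqrt 3)) :
    ({c : ℝ | δ ^ 2 * c - c ^ 3 = r}).ncard = 3 := by
  have hs3 := s3_sq
  have hs3p := s3_pos
  set a : ℝ := δ / Real.sqrt 3 with ha_def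
  set rc : ℝ := 2 * δ ^ 3 / (3 * Real.sqrt 3) with hrc_def
  have ha_pos : 0 < a := div_pos hδ hs3p
  have hfa : δ ^ 2 * a - a ^ 3 = rc := f_at_a δ
  have hfa' : δ ^ 2 * (-a) - (-a) ^ 3 = -rc := by linear_combination -hfa
  set M : ℝ := δ + |r| + 1 with hM_def
  have hfM : δ ^ 2 * M - M ^ 3 ≤ -(|r| + 1) := fM_bound δ |r| hδ (abs_nonneg r)
  have hfM' : |r| + 1 ≤ δ ^ 2 * (-M) - (-M) ^ 3 := by nlinarith [hfM]
  have haM : a ≤ M := by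
    have h1 : (1:ℝ) ≤ Real.sqrt 3 := by nlinarith [hs3, hs3p]
    have h2 : a ≤ δ := by rw [ha_def]; exact div_le_self hδ.le h1
    have := abs_nonneg r; linarith
  have hr1 : -rc < r := by have := abs_lt.mp hlt; linarith [this.1]
  have hr2 : r < rc := (le_abs_self r).trans_lt hlt
  have hrabs : r ≤ |r| := le_abs_self r
  have hrabs' : -|r| ≤ r := neg_abs_le r
  obtain ⟨c₂, hc₂mem, hc₂⟩ := intermediate_value_Icc (by linarith : -a ≤ a)
    (f_cont δ).continuousOn (by rw [hfa', hfa]; exact ⟨hr1.le, hr2.le⟩)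
  obtain ⟨c₁, hc₁mem, hc₁⟩ := intermediate_value_Icc' (by linarith : -M ≤ -a)
    (f_cont δ).continuousOn (by rw [hfa']; exact ⟨hr1.le, by linarith⟩)
  obtain ⟨c₃, hc₃mem, hc₃⟩ := intermediate_value_Icc' (by linarith : a ≤ M)
    (f_cont δ).continuousOn (by rw [hfa]; exact ⟨by linarith, hr2.le⟩)
  simp only [Set.mem_Icc] at hc₁mem hc₂mem hc₃mem
  simp only at hc₁ hc₂ hc₃
  have h1lt : c₁ < -a := lt_of_le_of_ne hc₁mem.2 (by
    intro h; rw [h] at hc₁; rw [hfa'] at hc₁; linarith)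
  have h2lt : -a < c₂ := lt_of_le_of_ne hc₂mem.1 (by
    intro h; rw [← h] at hc₂; rw [hfa'] at hc₂; linarith)
  have h2lt' : c₂ < a := lt_of_le_of_ne hc₂mem.2 (by
    intro h; rw [h] at hc₂; rw [hfa] at hc₂; linarith)
  have h3lt : a < c₃ := lt_of_le_of_ne hc₃mem.1 (by
    intro h; rw [← h] at hc₃; rw [hfa] at hc₃; linarith)
  have h12 : c₁ ≠ c₂ := ne_of_lt (by linarith)
  have h13 : c₁ ≠ c₃ := ne_of_lt (by linarith)
  have h23 : c₂ ≠ c₃ := ne_of_lt (by linarith)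
  rw [Set.ncard_eq_three]
  refine ⟨c₁, c₂, c₃, h12, h13, h23, ?_⟩
  ext c
  simp only [Set.mem_setOf_eq, Set.mem_insert_iff, Set.mem_singleton_iff]
  constructor
  · exact mem_three δ r c₁ c₂ c₃ c hc₁ hc₂ hc₃ h12 h13 h23
  · rintro (rfl | rfl | rfl) <;> assumption

private lemma roots_eq_pair (δ r ε : ℝ) (hδ : 0 < δ) (hε : ε = 1 ∨ ε = -1)
    (hr : r = ε * (2 * δ ^ 3 / (3 * Real.sqrt 3))) :
    {c : ℝ | δ ^ 2 * c - c ^ 3 = r}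
      = {ε * (δ / Real.sqrt 3), -2 * (ε * (δ / Real.sqrt 3))} := by
  have hs3 := s3_sq
  have hs3p := s3_pos
  set a : ℝ := δ / Real.sqrt 3 with ha_def
  have ha2 : 3 * a ^ 2 = δ ^ 2 := by rw [ha_def, div_pow, hs3]; field_simp
  have hε2 : ε ^ 2 = 1 := by rcases hε with rfl | rfl <;> norm_num
  have hr' : r = 2 * (ε * a) ^ 3 := by
    have h3 : 2 * a ^ 3 = 2 * δ ^ 3 / (3 * Real.sqrt 3) := by
      have h : a ^ 3 = δ ^ 3 / (3 * Real.sqrt 3) := by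
        rw [ha_def, div_pow]
        congr 1
        rw [pow_succ, hs3]
      rw [h]; ring
    rcases hε with rfl | rfl
    · rw [hr]; linarith [h3]
    · rw [hr]; nlinarith [h3]
  have h3 : 3 * (ε * a) ^ 2 = δ ^ 2 := by
    have h : (ε * a) ^ 2 = a ^ 2 := by rw [mul_pow, hε2, one_mul]
    rw [h]; exact ha2
  ext c
  simp only [Set.mem_setOf_eq, Set.mem_insert_iff, Set.mem_singleton_iff]
  constructor
  · intro hc
    have key : (c - ε * a) ^ 2 * (c + 2 * (ε * a)) = 0 := by
      linear_combination -hc - c * h3 - hr'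
    rcases mul_eq_zero.mp key with h | h
    · left
      have h0 := pow_eq_zero_iff (n := 2) (by norm_num) |>.mp h
      linarith [h0]
    · right; linarith [h]
  · rintro (rfl | rfl)
    · linear_combination -hr' - (ε * a) * h3
    · linear_combination -hr' + 2 * (ε * a) * h3

private lemma count_two (δ r : ℝ) (hδ : 0 < δ)
    (heq : |r| = 2 * δ ^ 3 / (3 * Real.sqrt 3)) :
    ({c : ℝ | δ ^ 2 * c - c ^ 3 = r}).ncard = 2 := by
  have hs3p := s3_pos
  have ha_pos : 0 < δ / Real.sqrt 3 := div_pos hδ hs3p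
  have hrc_pos : (0:ℝ) < 2 * δ ^ 3 / (3 * Real.sqrt 3) := by positivity
  rcases (abs_eq hrc_pos.le).mp heq with hr | hr
  · rw [roots_eq_pair δ r 1 hδ (Or.inl rfl) (by rw [hr]; ring)]
    exact Set.ncard_pair (by intro h; nlinarith [ha_pos] :
      (1:ℝ) * (δ / Real.sqrt 3) ≠ -2 * (1 * (δ / Real.sqrt 3)))
  · rw [roots_eq_pair δ r (-1) hδ (Or.inr rfl) (by rw [hr]; ring)]
    exact Set.ncard_pair (by intro h; nlinarith [ha_pos] :
      (-1:ℝ) * (δ / Real.sqrt 3) ≠ -2 * (-1 * (δ / Real.sqrt 3)))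

private lemma count_one (δ r : ℝ) (hδ : 0 < δ)
    (hgt : |r| > 2 * δ ^ 3 / (3 * Real.sqrt 3)) :
    ({c : ℝ | δ ^ 2 * c - c ^ 3 = r}).ncard = 1 := by
  have hs3 := s3_sq
  have hs3p := s3_pos
  set M : ℝ := δ + |r| + 1 with hM_def
  have hfM : δ ^ 2 * M - M ^ 3 ≤ -(|r| + 1) := fM_bound δ |r| hδ (abs_nonneg r)
  have hfM' : |r| + 1 ≤ δ ^ 2 * (-M) - (-M) ^ 3 := by nlinarith [hfM]
  have hrabs : r ≤ |r| := le_abs_self r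
  have hrabs' : -|r| ≤ r := neg_abs_le r
  have hMM : -M ≤ M := by have := abs_nonneg r; simp [hM_def]; linarith
  obtain ⟨c₀, hc₀mem, hc₀⟩ := intermediate_value_Icc' hMM
    (f_cont δ).continuousOn ⟨by linarith [hfM], by linarith [hfM']⟩
  simp only at hc₀
  rw [Set.ncard_eq_one]
  refine ⟨c₀, ?_⟩
  ext c
  simp only [Set.mem_setOf_eq, Set.mem_singleton_iff]
  constructor
  · intro hc
    by_contra hne
    have hA := two_roots δ r c₀ c hc₀ hc (fun h => hne h.symm)
    have hrr : r = c₀ ^ 2 * c + c₀ * c ^ 2 := by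
      linear_combination -hc₀ + c₀ * hA
    have h27 : 4 * δ ^ 6 - 27 * r ^ 2
        = ((c₀ - c) * (2 * (c₀ + c) ^ 2 + c₀ * c)) ^ 2 := by
      linear_combination (4 * (δ ^ 4 + δ ^ 2 * (c₀ ^ 2 + c₀ * c + c ^ 2)
          + (c₀ ^ 2 + c₀ * c + c ^ 2) ^ 2)) * hA
        - 27 * (r + c₀ ^ 2 * c + c₀ * c ^ 2) * hrr
    have hp : (3 * Real.sqrt 3) ^ 2 = 27 := by rw [mul_pow, hs3]; norm_num
    have h1 : 2 * δ ^ 3 < |r| * (3 * Real.sqrt 3) := by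
      rw [gt_iff_lt, div_lt_iff₀ (by positivity : (0:ℝ) < 3 * Real.sqrt 3)] at hgt
      exact hgt
    have h2 : (0:ℝ) < |r| * (3 * Real.sqrt 3) + 2 * δ ^ 3 := by positivity
    have h3 : (2 * δ ^ 3) ^ 2 < (|r| * (3 * Real.sqrt 3)) ^ 2 := by nlinarith [h1, h2]
    have h4 : (|r| * (3 * Real.sqrt 3)) ^ 2 = 27 * r ^ 2 := by
      rw [mul_pow, sq_abs, hp]; ring
    nlinarith [h3, h4, h27, sq_nonneg ((c₀ - c) * (2 * (c₀ + c) ^ 2 + c₀ * c))]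
  · rintro rfl; exact hc₀

private lemma cubic_deriv_eq (δ r x : ℝ) :
    deriv (fun c : ℝ => δ ^ 2 * c - c ^ 3 - r) x = δ ^ 2 - 3 * x ^ 2 := by
  have h : HasDerivAt (fun c : ℝ => δ ^ 2 * c - c ^ 3 - r) (δ ^ 2 - 3 * x ^ 2) x := by
    have h1 : HasDerivAt (fun c : ℝ => δ ^ 2 * c) (δ ^ 2 * 1) x :=
      (hasDerivAt_id x).const_mul (δ ^ 2)
    have h2 : HasDerivAt (fun c : ℝ => c ^ 3) (↑3 * x ^ 2) x := by
      simpa using hasDerivAt_pow 3 x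
    have := (h1.sub h2).sub_const r
    exact this.congr_deriv (by ring)

  exact h.deriv

/-- Invariant lines of the Bistable Linear example
`x' = −(x − rt)((x − rt)² − δ²)`: `x(t) = rt + c` is a solution iff
`δ²c − c³ = r`; with `r_c = 2δ³/(3√3)` there are exactly three such values of
`c` for `|r| < r_c`, exactly two for `|r| = r_c` (with `±δ/√3` a double root),
and exactly one for `|r| > r_c`. -/
theorem bistable_linear_invariant_lines (δ r : ℝ) (hδ : 0 < δ) :
    (∀ c : ℝ,
      (∀ t : ℝ, HasDerivAt (fun s => r * s + c)
          (-((r * t + c) - r * t) * (((r * t + c) - r * t) ^ 2 - δ ^ 2)) t) ↔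
        δ ^ 2 * c - c ^ 3 = r) ∧
    (|r| < 2 * δ ^ 3 / (3 * Real.sqrt 3) →
      ({c : ℝ | δ ^ 2 * c - c ^ 3 = r}).ncard = 3) ∧
    (|r| = 2 * δ ^ 3 / (3 * Real.sqrt 3) →
      ({c : ℝ | δ ^ 2 * c - c ^ 3 = r}).ncard = 2 ∧
      (r = 2 * δ ^ 3 / (3 * Real.sqrt 3) →
        δ ^ 2 * (δ / Real.sqrt 3) - (δ / Real.sqrt 3) ^ 3 - r = 0 ∧
        deriv (fun c : ℝ => δ ^ 2 * c - c ^ 3 - r) (δ / Real.sqrt 3) = 0) ∧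
      (r = -(2 * δ ^ 3 / (3 * Real.sqrt 3)) →
        δ ^ 2 * (-(δ / Real.sqrt 3)) - (-(δ / Real.sqrt 3)) ^ 3 - r = 0 ∧
        deriv (fun c : ℝ => δ ^ 2 * c - c ^ 3 - r) (-(δ / Real.sqrt 3)) = 0)) ∧
    (|r| > 2 * δ ^ 3 / (3 * Real.sqrt 3) →
      ({c : ℝ | δ ^ 2 * c - c ^ 3 = r}).ncard = 1) := by
  have hs3 := s3_sq
  have hs3p := s3_pos
  have ha2 : 3 * (δ / Real.sqrt 3) ^ 2 = δ ^ 2 := by rw [div_pow, hs3]; field_simp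
  refine ⟨?_, count_three δ r hδ, ?_, count_one δ r hδ⟩
  · intro c
    constructor
    · intro h
      have hd : HasDerivAt (fun s : ℝ => r * s + c) (r * 1) 0 :=
        ((hasDerivAt_id 0).const_mul r).add_const c
      have := (h 0).unique hd
      linear_combination this
    · intro hc t
      have hd : HasDerivAt (fun s : ℝ => r * s + c) (r * 1) t :=
        ((hasDerivAt_id t).const_mul r).add_const c
      convert hd using 1
      linear_combination hc
  · intro heq
    refine ⟨count_two δ r hδ heq, ?_, ?_⟩
    · intro hr
      refine ⟨by rw [f_at_a δ, hr]; ring, ?_⟩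
      rw [cubic_deriv_eq δ r]
      linarith [ha2]
    · intro hr
      constructor
      · have h := f_at_a δ
        rw [hr]; linarith [h]
      · rw [cubic_deriv_eq δ r]
        have h : (-(δ / Real.sqrt 3)) ^ 2 = (δ / Real.sqrt 3) ^ 2 := by ring
        rw [h]; linarith [ha2]
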